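/- Let π be a probability density on ℝ^D and let q be a multiproposal kernel generating proposal sets Θ* = (θ*_1, ..., θ*_{P+1}) containing the current state. Suppose the transition from current state θ*_{P+1} selects the next state θ*_p from Θ* with probability π(θ*_p)/∑_{j=1}^{P+1} π(θ*_j). If q satisfies the symmetry condition q(θ*_1, Θ*) = q(θ*_2, Θ*) = ... = q(θ*_{P+1}, Θ*), then the resulting transition probabilities satisfy detailed balance with respect to π: π(θ*_{P+1}) p(θ*_{P+1}, θ*_p) = π(θ*_p) p(θ*_p, θ*_{P+1}) for all p. -/
import Mathlib

/-- Multiproposal selection with a symmetric proposal-set kernel satisfies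
detailed balance: with `P + 1` states `Θ 0, ..., Θ P` (the last being the current state),
transition probabilities `p (Θ i) (Θ j) = q (Θ i) Θ * π (Θ j) / ∑ₖ π (Θ k)`, and the
symmetry condition `q (Θ i) Θ = q (Θ j) Θ`, we have
`π (Θ last) * p (Θ last) (Θ i) = π (Θ i) * p (Θ i) (Θ last)` for all `i`. -/
theorem stmt0 {α : Type*} (P : ℕ) (π : α → ℝ) (hπ : ∀ a, 0 < π a)
    (q : α → (Fin (P + 1) → α) → ℝ)
    (Θ : Fin (P + 1) → α)
    (hsymm : ∀ i j : Fin (P + 1), q (Θ i) Θ = q (Θ j) Θ)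
    (p : α → α → ℝ)
    (hp : ∀ i j : Fin (P + 1),
      p (Θ i) (Θ j) = q (Θ i) Θ * π (Θ j) / ∑ k, π (Θ k)) :
    ∀ i : Fin (P + 1),
      π (Θ (Fin.last P)) * p (Θ (Fin.last P)) (Θ i)
        = π (Θ i) * p (Θ i) (Θ (Fin.last P)) := by
  intro i
  rw [hp, hp, hsymm i (Fin.last P)]
  ring
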